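/- Let M : S → ℂ with M(1) = 1 and let L be its admissible cumulants. For every s ∈ S⁺ and every admissible partition u = (u_1,…,u_p) ∈ AP(s), setting M(u) = M(u_1)⋯M(u_p) and L(v) = L(v_1)⋯L(v_m) for v = (v_1,…,v_m) ∈ AP(s), one has M(u) = Σ_{v∈AP(s), v≤u} L(v), where v ≤ u means that v refines u. -/

import Mathlib

/-- The two-letter alphabet `{z, w}`. -/
inductive Letter | z | w
deriving DecidableEq

/-- Words: elements of the free monoid `S = FS({z,w})`. -/
abbrev Word := List Letter

/-- The letter of `s` at position `j` (defaulting to `z`). -/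
def letterAt (s : Word) (j : ℕ) : Letter := s.getD j Letter.z

/-- `P` is a partition of the finite set of positions `g ⊆ ℕ` into nonempty blocks. -/
def IsPartitionOn (g : Finset ℕ) (P : Finset (Finset ℕ)) : Prop :=
  (∀ b ∈ P, b.Nonempty) ∧ (P : Set (Finset ℕ)).PairwiseDisjoint id ∧ P.sup id = g

/-- The position `j` is inner with respect to the block `b`:
`j ∉ b` and `min b < j < max b`. -/
def InnerPos (j : ℕ) (b : Finset ℕ) : Prop :=
  j ∉ b ∧ ∃ i ∈ b, ∃ k ∈ b, i < j ∧ j < k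

/-- A partition is admissible if no block contains a letter `w` that is inner
with respect to another block. -/
def Admissible (s : Word) (P : Finset (Finset ℕ)) : Prop :=
  ∀ b ∈ P, ∀ b' ∈ P, b ≠ b' → ∀ j ∈ b, letterAt s j = Letter.w → ¬ InnerPos j b'

open scoped Classical in
/-- The set `AP(s)` of admissible partitions of the positions `g` of the word `s`. -/
noncomputable def APfin (s : Word) (g : Finset ℕ) : Finset (Finset (Finset ℕ)) :=
  g.powerset.powerset.filter fun P => IsPartitionOn g P ∧ Admissible s P

/-- The subword of `s` determined by a set of positions `b`. -/
def wordOf (s : Word) (b : Finset ℕ) : Word :=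
  (b.sort (· ≤ ·)).map (letterAt s)

/-- `L` is the family of admissible cumulants of the moment function `M`:
`M(s) = Σ_{u ∈ AP(s)} L(u₁)⋯L(u_p)` for every nonempty word `s`. -/
def IsCumulants (M L : Word → ℂ) : Prop :=
  ∀ s : Word, s ≠ [] →
    M s = ∑ P ∈ APfin s (Finset.range s.length), ∏ b ∈ P, L (wordOf s b)

/-- `P` refines `Q`: every block of `P` is contained in a block of `Q`. -/
def Refines (P Q : Finset (Finset ℕ)) : Prop := ∀ b ∈ P, ∃ c ∈ Q, b ⊆ c

open scoped Classical in
/-- `m` is the Möbius function of the lattice `AP(s)` of admissible partitions of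
the position set `g` of `s`: `m(u|u) = 1` and `m(u|v) = −Σ_{u ≤ t < v} m(u|t)`. -/
noncomputable def IsMobius (s : Word) (g : Finset ℕ)
    (m : Finset (Finset ℕ) → Finset (Finset ℕ) → ℂ) : Prop :=
  (∀ u ∈ APfin s g, m u u = 1) ∧
    ∀ u ∈ APfin s g, ∀ v ∈ APfin s g, Refines u v → u ≠ v →
      m u v = -∑ t ∈ (APfin s g).filter fun t => Refines u t ∧ Refines t v ∧ t ≠ v, m u t

section AuxProof

open Finset

lemma mem_APfin {s : Word} {g : Finset ℕ} {P : Finset (Finset ℕ)} :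
    P ∈ APfin s g ↔ IsPartitionOn g P ∧ Admissible s P := by
  classical
  unfold APfin
  rw [Finset.mem_filter, and_iff_right_iff_imp]
  rintro ⟨⟨hne, hdisj, hsup⟩, -⟩
  rw [Finset.mem_powerset]
  intro b hb
  rw [Finset.mem_powerset]
  exact hsup ▸ Finset.le_sup (f := id) hb

lemma block_subset_of_mem_APfin {s : Word} {g : Finset ℕ} {P : Finset (Finset ℕ)}
    (hP : P ∈ APfin s g) {b : Finset ℕ} (hb : b ∈ P) : b ⊆ g := by
  have := (mem_APfin.mp hP).1.2.2
  exact this ▸ Finset.le_sup (f := id) hb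

/-- index-to-position map of a block -/
def idxTo (b : Finset ℕ) (j : ℕ) : ℕ := (b.sort (· ≤ ·)).getD j 0

/-- position-to-index map of a block -/
def idxFrom (b : Finset ℕ) (y : ℕ) : ℕ := (b.sort (· ≤ ·)).idxOf y

lemma length_sort' (b : Finset ℕ) : (b.sort (· ≤ ·)).length = b.card :=
  Finset.length_sort _

lemma idxTo_mem {b : Finset ℕ} {j : ℕ} (h : j < b.card) : idxTo b j ∈ b := by
  have h' : j < (b.sort (· ≤ ·)).length := by rw [length_sort']; exact h
  rw [idxTo, List.getD_eq_getElem _ _ h']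
  exact (Finset.mem_sort _).mp (List.getElem_mem _)

lemma idxTo_lt_idxTo {b : Finset ℕ} {j k : ℕ} (hjk : j < k) (hk : k < b.card) :
    idxTo b j < idxTo b k := by
  have hk' : k < (b.sort (· ≤ ·)).length := by rw [length_sort']; exact hk
  have hj' : j < (b.sort (· ≤ ·)).length := lt_trans hjk hk'
  simp only [idxTo]
  rw [List.getD_eq_getElem _ _ hj', List.getD_eq_getElem _ _ hk']
  have := (b.sortedLT_sort).pairwise.rel_get_of_lt (a := ⟨j, hj'⟩) (b := ⟨k, hk'⟩) hjk
  simpa [List.get_eq_getElem] using this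

lemma idxFrom_lt {b : Finset ℕ} {y : ℕ} (h : y ∈ b) : idxFrom b y < b.card := by
  rw [idxFrom, ← length_sort' b]
  exact List.idxOf_lt_length_iff.mpr ((Finset.mem_sort _).mpr h)

lemma idxTo_idxFrom {b : Finset ℕ} {y : ℕ} (h : y ∈ b) : idxTo b (idxFrom b y) = y := by
  have h' : (b.sort (· ≤ ·)).idxOf y < (b.sort (· ≤ ·)).length :=
    List.idxOf_lt_length_iff.mpr ((Finset.mem_sort _).mpr h)
  rw [idxTo, idxFrom, List.getD_eq_getElem _ _ h', List.getElem_idxOf h']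

lemma idxFrom_idxTo {b : Finset ℕ} {j : ℕ} (h : j < b.card) : idxFrom b (idxTo b j) = j := by
  have h' : j < (b.sort (· ≤ ·)).length := by rw [length_sort']; exact h
  rw [idxTo, idxFrom, List.getD_eq_getElem _ _ h']
  exact List.Nodup.idxOf_getElem (b.sort_nodup _) _ h'

lemma idxFrom_lt_idxFrom {b : Finset ℕ} {y y' : ℕ} (hy : y ∈ b) (hy' : y' ∈ b)
    (h : y < y') : idxFrom b y < idxFrom b y' := by
  rcases lt_trichotomy (idxFrom b y) (idxFrom b y') with h1 | h1 | h1
  · exact h1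
  · exfalso; have := congrArg (idxTo b) h1
    rw [idxTo_idxFrom hy, idxTo_idxFrom hy'] at this; omega
  · exfalso
    have := idxTo_lt_idxTo h1 (idxFrom_lt hy)
    rw [idxTo_idxFrom hy, idxTo_idxFrom hy'] at this; omega

lemma length_wordOf (s : Word) (b : Finset ℕ) : (wordOf s b).length = b.card := by
  simp [wordOf, length_sort']

lemma letterAt_wordOf {s : Word} {b : Finset ℕ} {j : ℕ} (h : j < b.card) :
    letterAt (wordOf s b) j = letterAt s (idxTo b j) := by
  have h' : j < (b.sort (· ≤ ·)).length := by rw [length_sort']; exact h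
  have h'' : j < (wordOf s b).length := by rw [length_wordOf]; exact h
  rw [letterAt, List.getD_eq_getElem _ _ h'']
  rw [idxTo, List.getD_eq_getElem _ _ h']
  simp [wordOf]

/-- sorting commutes with a strictly monotone image -/
lemma sort_image_strictMono {e : ℕ → ℕ} {c : Finset ℕ}
    (hmono : ∀ j ∈ c, ∀ k ∈ c, j < k → e j < e k) :
    (c.image e).sort (· ≤ ·) = (c.sort (· ≤ ·)).map e := by
  have hinj : ∀ j ∈ c, ∀ k ∈ c, e j = e k → j = k := by
    intro j hj k hk hjk
    rcases lt_trichotomy j k with h | h | h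
    · exact absurd hjk (ne_of_lt (hmono j hj k hk h))
    · exact h
    · exact absurd hjk.symm (ne_of_lt (hmono k hk j hj h))
  apply List.Perm.eq_of_pairwise' (Finset.pairwise_sort _ _) ?_ ?_
  · -- sorted
    rw [List.pairwise_map]
    refine List.Pairwise.imp_of_mem ?_ (c.sortedLT_sort.pairwise)
    intro a b ha hb hab
    exact le_of_lt (hmono a ((Finset.mem_sort _).mp ha) b ((Finset.mem_sort _).mp hb) hab)
  · -- perm
    apply List.perm_of_nodup_nodup_toFinset_eq (Finset.sort_nodup _ _)
    · exact List.Nodup.map_on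
        (fun j hj k hk h => hinj j ((Finset.mem_sort _).mp hj) k ((Finset.mem_sort _).mp hk) h)
        (Finset.sort_nodup _ _)
    · rw [Finset.sort_toFinset]
      ext x
      simp only [List.mem_toFinset, List.mem_map, Finset.mem_image]
      constructor
      · rintro ⟨a, ha, rfl⟩; exact ⟨a, (Finset.mem_sort (· ≤ ·)).mpr ha, rfl⟩
      · rintro ⟨a, ha, rfl⟩; exact ⟨a, (Finset.mem_sort (· ≤ ·)).mp ha, rfl⟩

lemma wordOf_image {s t : Word} {e : ℕ → ℕ} {c : Finset ℕ}
    (hmono : ∀ j ∈ c, ∀ k ∈ c, j < k → e j < e k)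
    (hlet : ∀ j ∈ c, letterAt t (e j) = letterAt s j) :
    wordOf t (c.image e) = wordOf s c := by
  rw [wordOf, wordOf, sort_image_strictMono hmono, List.map_map]
  apply List.map_congr_left
  intro j hj
  exact hlet j ((Finset.mem_sort _).mp hj)

lemma innerPos_image {e : ℕ → ℕ} {g : Finset ℕ}
    (hmono : ∀ j ∈ g, ∀ k ∈ g, j < k → e j < e k)
    {j : ℕ} (hj : j ∈ g) {c : Finset ℕ} (hc : c ⊆ g) :
    InnerPos (e j) (c.image e) ↔ InnerPos j c := by
  have hinj : ∀ a ∈ g, ∀ b ∈ g, e a = e b → a = b := by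
    intro a ha b hb hab
    rcases lt_trichotomy a b with h | h | h
    · exact absurd hab (ne_of_lt (hmono a ha b hb h))
    · exact h
    · exact absurd hab.symm (ne_of_lt (hmono b hb a ha h))
  have hlt : ∀ a ∈ g, ∀ b ∈ g, (e a < e b ↔ a < b) := by
    intro a ha b hb
    constructor
    · intro h
      rcases lt_trichotomy a b with h' | h' | h'
      · exact h'
      · subst h'; omega
      · exact absurd h (not_lt.mpr (le_of_lt (hmono b hb a ha h')))
    · exact hmono a ha b hb
  constructor
  · rintro ⟨hn, i, hi, k, hk, h1, h2⟩
    rcases Finset.mem_image.mp hi with ⟨i0, hi0, rfl⟩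
    rcases Finset.mem_image.mp hk with ⟨k0, hk0, rfl⟩
    refine ⟨fun hjc => hn (Finset.mem_image_of_mem e hjc), i0, hi0, k0, hk0, ?_, ?_⟩
    · exact (hlt i0 (hc hi0) j hj).mp h1
    · exact (hlt j hj k0 (hc hk0)).mp h2
  · rintro ⟨hn, i, hi, k, hk, h1, h2⟩
    refine ⟨?_, e i, Finset.mem_image_of_mem e hi, e k, Finset.mem_image_of_mem e hk, ?_, ?_⟩
    · intro hmem
      rcases Finset.mem_image.mp hmem with ⟨j0, hj0, hj0e⟩
      exact hn (hinj j0 (hc hj0) j hj hj0e ▸ hj0)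
    · exact hmono i (hc hi) j hj h1
    · exact hmono j hj k (hc hk) h2

lemma image_image_cancel {e e' : ℕ → ℕ} {g : Finset ℕ} (h : ∀ j ∈ g, e' (e j) = j)
    {c : Finset ℕ} (hc : c ⊆ g) : (c.image e).image e' = c := by
  rw [Finset.image_image]
  ext x
  simp only [Finset.mem_image, Function.comp_apply]
  constructor
  · rintro ⟨j, hj, rfl⟩; rw [h j (hc hj)]; exact hj
  · intro hx; exact ⟨x, hx, h x (hc hx)⟩

lemma APfin_map {s t : Word} {g h : Finset ℕ} {e : ℕ → ℕ}
    (hmemE : ∀ j ∈ g, e j ∈ h) (hsurj : ∀ y ∈ h, ∃ j ∈ g, e j = y)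
    (hmono : ∀ j ∈ g, ∀ k ∈ g, j < k → e j < e k)
    (hlet : ∀ j ∈ g, letterAt t (e j) = letterAt s j)
    {P : Finset (Finset ℕ)} (hP : P ∈ APfin s g) :
    P.image (Finset.image e) ∈ APfin t h := by
  have hinj : ∀ a ∈ g, ∀ b ∈ g, e a = e b → a = b := by
    intro a ha b hb hab
    rcases lt_trichotomy a b with h' | h' | h'
    · exact absurd hab (ne_of_lt (hmono a ha b hb h'))
    · exact h'
    · exact absurd hab.symm (ne_of_lt (hmono b hb a ha h'))
  obtain ⟨⟨hne, hdisj, hsup⟩, hadm⟩ := mem_APfin.mp hP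
  have hbg : ∀ c ∈ P, c ⊆ g := fun c hc => hsup ▸ Finset.le_sup (f := id) hc
  have hblockinj : ∀ c ∈ P, ∀ c' ∈ P, c.image e = c'.image e → c = c' := by
    intro c hc c' hc' hcc
    ext x
    constructor
    · intro hx
      have : e x ∈ c'.image e := hcc ▸ Finset.mem_image_of_mem e hx
      rcases Finset.mem_image.mp this with ⟨y, hy, hye⟩
      exact (hinj y (hbg c' hc' hy) x (hbg c hc hx) hye) ▸ hy
    · intro hx
      have : e x ∈ c.image e := hcc ▸ Finset.mem_image_of_mem e hx
      rcases Finset.mem_image.mp this with ⟨y, hy, hye⟩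
      exact (hinj y (hbg c hc hy) x (hbg c' hc' hx) hye) ▸ hy
  refine mem_APfin.mpr ⟨⟨?_, ?_, ?_⟩, ?_⟩
  · rintro b hb
    rcases Finset.mem_image.mp hb with ⟨c, hc, rfl⟩
    exact (hne c hc).image e
  · rintro b hb b' hb' hbb
    rcases Finset.mem_image.mp hb with ⟨c, hc, rfl⟩
    rcases Finset.mem_image.mp hb' with ⟨c', hc', rfl⟩
    have hcc : c ≠ c' := fun hq => hbb (by rw [hq])
    apply Finset.disjoint_left.mpr
    intro x hx hx'
    rcases Finset.mem_image.mp hx with ⟨y, hy, rfl⟩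
    rcases Finset.mem_image.mp hx' with ⟨y', hy', hyy⟩
    have : y' = y := hinj y' (hbg c' hc' hy') y (hbg c hc hy) hyy
    subst this
    exact Finset.disjoint_left.mp (hdisj hc hc' hcc) hy hy'
  · apply le_antisymm
    · apply Finset.sup_le
      intro b hb
      rcases Finset.mem_image.mp hb with ⟨c, hc, rfl⟩
      intro x hx
      rcases Finset.mem_image.mp hx with ⟨y, hy, rfl⟩
      exact hmemE y (hbg c hc hy)
    · intro x hx
      rcases hsurj x hx with ⟨j, hj, rfl⟩
      have : j ∈ P.sup id := hsup ▸ hj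
      rcases Finset.mem_sup.mp this with ⟨c, hc, hjc⟩
      exact Finset.mem_sup.mpr ⟨c.image e, Finset.mem_image_of_mem _ hc,
        Finset.mem_image_of_mem e hjc⟩
  · rintro b hb b' hb' hbb y hy hw hinner
    rcases Finset.mem_image.mp hb with ⟨c, hc, rfl⟩
    rcases Finset.mem_image.mp hb' with ⟨c', hc', rfl⟩
    rcases Finset.mem_image.mp hy with ⟨j, hj, rfl⟩
    have hcc : c ≠ c' := fun hq => hbb (by rw [hq])
    have hjg : j ∈ g := hbg c hc hj
    refine hadm c hc c' hc' hcc j hj ?_ ?_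
    · rw [← hlet j hjg]; exact hw
    · exact (innerPos_image hmono hjg (hbg c' hc')).mp hinner

lemma image_injOn_blocks {e e' : ℕ → ℕ} {g : Finset ℕ} (hcan : ∀ j ∈ g, e' (e j) = j)
    {P : Finset (Finset ℕ)} (hbg : ∀ c ∈ P, c ⊆ g) :
    ∀ c ∈ P, ∀ c' ∈ P, c.image e = c'.image e → c = c' := by
  intro c hc c' hc' hcc
  have := congrArg (Finset.image e') hcc
  rwa [image_image_cancel hcan (hbg c hc), image_image_cancel hcan (hbg c' hc')] at this

lemma momentA (M L : Word → ℂ) (hL : IsCumulants M L) (s : Word) (b : Finset ℕ)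
    (hb : b.Nonempty) :
    M (wordOf s b) = ∑ Q ∈ APfin s b, ∏ c ∈ Q, L (wordOf s c) := by
  have hlen : (wordOf s b).length = b.card := length_wordOf s b
  have hne : wordOf s b ≠ [] := by
    intro hq
    rw [hq] at hlen
    exact hb.ne_empty (Finset.card_eq_zero.mp hlen.symm)
  have hmemE : ∀ j ∈ Finset.range b.card, idxTo b j ∈ b :=
    fun j hj => idxTo_mem (Finset.mem_range.mp hj)
  have hsurj : ∀ y ∈ b, ∃ j ∈ Finset.range b.card, idxTo b j = y :=
    fun y hy => ⟨idxFrom b y, Finset.mem_range.mpr (idxFrom_lt hy), idxTo_idxFrom hy⟩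
  have hmono : ∀ j ∈ Finset.range b.card, ∀ k ∈ Finset.range b.card, j < k →
      idxTo b j < idxTo b k :=
    fun j _ k hk hjk => idxTo_lt_idxTo hjk (Finset.mem_range.mp hk)
  have hlet : ∀ j ∈ Finset.range b.card, letterAt s (idxTo b j) = letterAt (wordOf s b) j :=
    fun j hj => (letterAt_wordOf (Finset.mem_range.mp hj)).symm
  have hmemE' : ∀ y ∈ b, idxFrom b y ∈ Finset.range b.card :=
    fun y hy => Finset.mem_range.mpr (idxFrom_lt hy)
  have hsurj' : ∀ j ∈ Finset.range b.card, ∃ y ∈ b, idxFrom b y = j :=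
    fun j hj => ⟨idxTo b j, idxTo_mem (Finset.mem_range.mp hj),
      idxFrom_idxTo (Finset.mem_range.mp hj)⟩
  have hmono' : ∀ y ∈ b, ∀ y' ∈ b, y < y' → idxFrom b y < idxFrom b y' :=
    fun y hy y' hy' h => idxFrom_lt_idxFrom hy hy' h
  have hlet' : ∀ y ∈ b, letterAt (wordOf s b) (idxFrom b y) = letterAt s y := by
    intro y hy
    rw [letterAt_wordOf (idxFrom_lt hy), idxTo_idxFrom hy]
  have hcan : ∀ j ∈ Finset.range b.card, idxFrom b (idxTo b j) = j :=
    fun j hj => idxFrom_idxTo (Finset.mem_range.mp hj)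
  have hcan' : ∀ y ∈ b, idxTo b (idxFrom b y) = y := fun y hy => idxTo_idxFrom hy
  rw [hL _ hne, hlen]
  refine Finset.sum_nbij' (i := fun P => P.image (Finset.image (idxTo b)))
    (j := fun Q => Q.image (Finset.image (idxFrom b))) ?_ ?_ ?_ ?_ ?_
  · intro P hP
    exact APfin_map hmemE hsurj hmono hlet hP
  · intro Q hQ
    exact APfin_map hmemE' hsurj' hmono' hlet' hQ
  · intro P hP
    rw [Finset.image_image]
    have : ∀ c ∈ P, (Finset.image (idxFrom b) ∘ Finset.image (idxTo b)) c = id c := by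
      intro c hc
      exact image_image_cancel hcan (block_subset_of_mem_APfin hP hc)
    rw [Finset.image_congr fun c hc => this c hc, Finset.image_id]
  · intro Q hQ
    rw [Finset.image_image]
    have : ∀ c ∈ Q, (Finset.image (idxTo b) ∘ Finset.image (idxFrom b)) c = id c := by
      intro c hc
      exact image_image_cancel hcan' (block_subset_of_mem_APfin hQ hc)
    rw [Finset.image_congr fun c hc => this c hc, Finset.image_id]
  · intro P hP
    rw [Finset.prod_image (image_injOn_blocks hcan (fun c hc => block_subset_of_mem_APfin hP hc))]
    apply Finset.prod_congr rfl
    intro c hc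
    have hcg := block_subset_of_mem_APfin hP hc
    rw [wordOf_image (fun j hj k hk hjk => hmono j (hcg hj) k (hcg hk) hjk)
      (fun j hj => hlet j (hcg hj))]

end AuxProof

open scoped Classical in
/-- for every admissible partition `u` of `s`,
`M(u) = Σ_{v ∈ AP(s), v ≤ u} L(v)`, where `M(u)`, `L(v)` denote the products of the
values of `M`, `L` over the blocks. -/
theorem moment_eq_sum_cumulants_over_refinements (M L : Word → ℂ)
    (hM1 : M [] = 1) (hL : IsCumulants M L)
    (s : Word) (hs : s ≠ [])
    (u : Finset (Finset ℕ)) (hu : u ∈ APfin s (Finset.range s.length)) :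
    ∏ b ∈ u, M (wordOf s b) =
      ∑ v ∈ (APfin s (Finset.range s.length)).filter (fun v => Refines v u),
        ∏ b ∈ v, L (wordOf s b) := by
  classical
  obtain ⟨⟨hne, hdisj, hsup⟩, hadm⟩ := mem_APfin.mp hu
  have hbg : ∀ b ∈ u, b ⊆ Finset.range s.length :=
    fun b hb => hsup ▸ Finset.le_sup (f := id) hb
  have step1 : ∏ b ∈ u, M (wordOf s b)
      = ∏ b ∈ u, ∑ Q ∈ APfin s b, ∏ c ∈ Q, L (wordOf s c) :=
    Finset.prod_congr rfl fun b hb => momentA M L hL s b (hne b hb)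
  rw [step1, Finset.prod_sum]
  refine Finset.sum_nbij' (i := fun φ => u.attach.biUnion fun x => φ x.1 x.2)
    (j := fun v => fun b hb => v.filter (· ⊆ b)) ?_ ?_ ?_ ?_ ?_
  · -- hi
    intro φ hφ
    rw [Finset.mem_pi] at hφ
    have hblk : ∀ x : {a // a ∈ u}, ∀ c ∈ φ x.1 x.2, c ⊆ x.1 :=
      fun x c hc => block_subset_of_mem_APfin (hφ x.1 x.2) hc
    have hmem : ∀ c, c ∈ (u.attach.biUnion fun x => φ x.1 x.2) ↔
        ∃ x : {a // a ∈ u}, c ∈ φ x.1 x.2 := by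
      intro c
      simp [Finset.mem_biUnion]
    refine Finset.mem_filter.mpr ⟨mem_APfin.mpr ⟨⟨?_, ?_, ?_⟩, ?_⟩, ?_⟩
    · intro c hc
      obtain ⟨x, hx⟩ := (hmem c).mp hc
      exact (mem_APfin.mp (hφ x.1 x.2)).1.1 c hx
    · intro c hc c' hc' hcc
      obtain ⟨x, hx⟩ := (hmem c).mp (by exact_mod_cast hc)
      obtain ⟨x', hx'⟩ := (hmem c').mp (by exact_mod_cast hc')
      by_cases hxx : x.1 = x'.1
      · have hx'2 : c' ∈ φ x.1 x.2 := by
          have : x = x' := Subtype.ext hxx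
          rw [this]; exact hx'
        exact (mem_APfin.mp (hφ x.1 x.2)).1.2.1 hx hx'2 hcc
      · exact Disjoint.mono (hblk x c hx) (hblk x' c' hx') (hdisj x.2 x'.2 hxx)
    · apply le_antisymm
      · apply Finset.sup_le
        intro c hc
        obtain ⟨x, hx⟩ := (hmem c).mp hc
        exact le_trans (hblk x c hx) (hbg x.1 x.2)
      · intro y hy
        have : y ∈ u.sup id := hsup ▸ hy
        obtain ⟨b, hb, hyb⟩ := Finset.mem_sup.mp this
        have : y ∈ (φ b hb).sup id := ((mem_APfin.mp (hφ b hb)).1.2.2).symm ▸ hyb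
        obtain ⟨c, hc, hyc⟩ := Finset.mem_sup.mp this
        exact Finset.mem_sup.mpr ⟨c, (hmem c).mpr ⟨⟨b, hb⟩, hc⟩, hyc⟩
    · intro c hc c' hc' hcc j hj hw hinner
      obtain ⟨x, hx⟩ := (hmem c).mp hc
      obtain ⟨x', hx'⟩ := (hmem c').mp hc'
      by_cases hxx : x.1 = x'.1
      · have hx'2 : c' ∈ φ x.1 x.2 := by
          have : x = x' := Subtype.ext hxx
          rw [this]; exact hx'
        exact (mem_APfin.mp (hφ x.1 x.2)).2 c hx c' hx'2 hcc j hj hw hinner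
      · obtain ⟨hjn, i, hi, k, hk, h1, h2⟩ := hinner
        refine hadm x.1 x.2 x'.1 x'.2 hxx j (hblk x c hx hj) hw ?_
        refine ⟨?_, i, hblk x' c' hx' hi, k, hblk x' c' hx' hk, h1, h2⟩
        intro hjx'
        exact Finset.disjoint_left.mp (hdisj x.2 x'.2 hxx) (hblk x c hx hj) hjx'
    · intro c hc
      obtain ⟨x, hx⟩ := (hmem c).mp hc
      exact ⟨x.1, x.2, hblk x c hx⟩
  · -- hj
    intro v hv
    obtain ⟨hv1, href⟩ := Finset.mem_filter.mp hv
    obtain ⟨⟨vne, vdisj, vsup⟩, vadm⟩ := mem_APfin.mp hv1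
    rw [Finset.mem_pi]
    intro b hb
    refine mem_APfin.mpr ⟨⟨?_, ?_, ?_⟩, ?_⟩
    · intro c hc
      exact vne c (Finset.mem_of_mem_filter c hc)
    · exact vdisj.subset (by exact_mod_cast Finset.filter_subset _ v)
    · apply le_antisymm
      · apply Finset.sup_le
        intro c hc
        exact (Finset.mem_filter.mp hc).2
      · intro y hy
        have : y ∈ v.sup id := vsup.symm ▸ (hbg b hb hy)
        obtain ⟨c, hc, hyc⟩ := Finset.mem_sup.mp this
        obtain ⟨b', hb', hcb'⟩ := href c hc
        have hbb : b = b' := by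
          by_contra hne'
          exact Finset.disjoint_left.mp (hdisj hb hb' hne') hy (hcb' hyc)
        refine Finset.mem_sup.mpr ⟨c, Finset.mem_filter.mpr ⟨hc, ?_⟩, hyc⟩
        rw [hbb]; exact hcb'
    · intro c hc c' hc' hcc j hj hw hinner
      exact vadm c (Finset.mem_of_mem_filter c hc) c' (Finset.mem_of_mem_filter c' hc')
        hcc j hj hw hinner
  · -- left inverse
    intro φ hφ
    rw [Finset.mem_pi] at hφ
    funext b hb
    have hblk : ∀ x : {a // a ∈ u}, ∀ c ∈ φ x.1 x.2, c ⊆ x.1 :=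
      fun x c hc => block_subset_of_mem_APfin (hφ x.1 x.2) hc
    ext c
    simp only [Finset.mem_filter, Finset.mem_biUnion, Finset.mem_attach, true_and]
    constructor
    · rintro ⟨⟨x, hx⟩, hcb⟩
      by_cases hxx : x.1 = b
      · have : x = (⟨b, hb⟩ : {a // a ∈ u}) := Subtype.ext hxx
        rw [this] at hx; exact hx
      · exfalso
        obtain ⟨y, hy⟩ := (mem_APfin.mp (hφ x.1 x.2)).1.1 c hx
        exact Finset.disjoint_left.mp (hdisj x.2 hb hxx) (hblk x c hx hy) (hcb hy)
    · intro hc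
      exact ⟨⟨(⟨b, hb⟩ : {a // a ∈ u}), hc⟩, hblk ⟨b, hb⟩ c hc⟩
  · -- right inverse
    intro v hv
    obtain ⟨hv1, href⟩ := Finset.mem_filter.mp hv
    ext c
    simp only [Finset.mem_biUnion, Finset.mem_attach, true_and, Finset.mem_filter]
    constructor
    · rintro ⟨x, hc, -⟩
      exact hc
    · intro hc
      obtain ⟨b, hb, hcb⟩ := href c hc
      exact ⟨⟨b, hb⟩, hc, hcb⟩
  · -- values
    intro φ hφ
    rw [Finset.mem_pi] at hφ
    have hblk : ∀ x : {a // a ∈ u}, ∀ c ∈ φ x.1 x.2, c ⊆ x.1 :=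
      fun x c hc => block_subset_of_mem_APfin (hφ x.1 x.2) hc
    rw [Finset.prod_biUnion]
    intro x hx x' hx' hxx
    have hxx1 : x.1 ≠ x'.1 := fun h => hxx (Subtype.ext h)
    apply Finset.disjoint_left.mpr
    intro c hc hc'
    obtain ⟨y, hy⟩ := (mem_APfin.mp (hφ x.1 x.2)).1.1 c hc
    exact Finset.disjoint_left.mp (hdisj x.2 x'.2 hxx1) (hblk x c hc hy) (hblk x' c hc' hy)
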